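/- Existence of functions with prescribed decay of their Littlewood–Paley-type blocks (Lemma A.6, elementarized): Let h : ℝ → ℝ be a Schwartz function with ∫₀^∞ h(−y) dy ≠ 0, let γ ∈ (−1,0) and ε > 0. Then there exist η ∈ (−1,0) with |η − γ| < ε, an index J ∈ ℕ, and constants c, C > 0 such that the function b(y) := y^η·1_{(0,1)}(y) satisfies: (a) for every j ∈ ℕ, sup_{x∈ℝ} |Δ_j b(x)| ≤ C·2^{−jη}; and (b) for every j ≥ J, sup_{x∈ℝ} |Δ_j b(x)| ≥ c·2^{−jη}; where Δ_j b(x) := ∫_ℝ 2^j·h(2^j(x−y))·b(y) dy. -/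

import Mathlib

open Real MeasureTheory Set Filter Complex Asymptotics Topology

lemma schwartz_bound (h : SchwartzMap ℝ ℝ) : ∃ M : ℝ, 0 < M ∧ ∀ x, |h x| ≤ M := by
  obtain ⟨C, hC, hC'⟩ := h.decay 0 0
  refine ⟨C, hC, fun x => ?_⟩
  have := hC' x
  simpa [norm_iteratedFDeriv_zero] using this

lemma mellin_nonzero_exists (h : SchwartzMap ℝ ℝ)
    (h0 : (∫ y in Set.Ioi (0 : ℝ), h (-y)) ≠ 0)
    {l r : ℝ} (hl : -1 ≤ l) (hr : r ≤ 0) (hlr : l < r) :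
    ∃ η ∈ Set.Ioo l r, (∫ t in Set.Ioi (0 : ℝ), h (-t) * t ^ η) ≠ 0 := by
  by_contra hcon
  push_neg at hcon
  set f : ℝ → ℂ := fun t => (h (-t) : ℂ) with hf
  obtain ⟨M, hM, hMle⟩ := schwartz_bound h
  -- local integrability
  have hcont : Continuous f := Complex.continuous_ofReal.comp (h.continuous.comp continuous_neg)
  have hloc : LocallyIntegrableOn f (Ioi 0) :=
    hcont.locallyIntegrable.locallyIntegrableOn _
  -- decay at infinity
  have htop : f =O[atTop] (fun x : ℝ => x ^ (-(2:ℝ))) := by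
    have h1 : (fun t : ℝ => h (-t)) =O[atTop] (fun x : ℝ => ‖x‖ ^ (-(2:ℝ))) := by
      have := (h.isBigO_cocompact_rpow (-(2:ℝ))).comp_tendsto
        (tendsto_neg_atTop_atBot.mono_right (by
          rw [cocompact_eq_atBot_atTop]; exact le_sup_left))
      simpa [Function.comp_def, abs_neg] using this
    have h2 : f =O[atTop] (fun t : ℝ => h (-t)) :=
      isBigO_of_le _ (fun x => by simp [hf])
    refine (h2.trans h1).trans (IsBigO.of_bound 1 ?_)
    filter_upwards [eventually_ge_atTop (0:ℝ)] with x hx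
    simp [Real.norm_of_nonneg hx, _root_.abs_of_nonneg hx]
  -- bounded at 0
  have hbot : f =O[𝓝[>] (0:ℝ)] (fun x : ℝ => x ^ (-(0:ℝ))) := by
    refine IsBigO.of_bound M (Eventually.of_forall fun x => ?_)
    simp only [neg_zero, Real.rpow_zero, norm_one, mul_one, hf, Complex.norm_real]
    exact (hMle _)
  set U : Set ℂ := {s : ℂ | 0 < s.re ∧ s.re < 2} with hU
  have hUopen : IsOpen U :=
    (isOpen_lt continuous_const Complex.continuous_re).inter
      (isOpen_lt Complex.continuous_re continuous_const)
  have hUconv : Convex ℝ U := by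
    have : U = Complex.reLm ⁻¹' (Ioo (0:ℝ) 2) := by
      ext z; simp [hU, Set.mem_Ioo]
    rw [this]
    exact (convex_Ioo (0:ℝ) 2).linear_preimage _
  have hAn : AnalyticOnNhd ℂ (mellin f) U := by
    refine DifferentiableOn.analyticOnNhd (fun s hs => ?_) hUopen
    exact (mellin_differentiableAt_of_isBigO_rpow hloc htop hs.2 hbot hs.1).differentiableWithinAt
  -- mellin value at real points
  have hval : ∀ η : ℝ, mellin f ((1 + η : ℝ) : ℂ)
      = ((∫ t in Set.Ioi (0 : ℝ), h (-t) * t ^ η : ℝ) : ℂ) := by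
    intro η
    rw [mellin]
    calc ∫ t in Set.Ioi (0:ℝ), (t:ℂ) ^ (((1 + η : ℝ) : ℂ) - 1) • f t
        = ∫ t in Set.Ioi (0:ℝ), ((h (-t) * t ^ η : ℝ) : ℂ) := by
          refine setIntegral_congr_fun measurableSet_Ioi (fun t ht => ?_)
          have ht0 : (0:ℝ) < t := ht
          rw [show ((1 + η : ℝ) : ℂ) - 1 = ((η : ℝ) : ℂ) by push_cast; ring,
            ← Complex.ofReal_cpow ht0.le]
          simp only [hf]
          rw [smul_eq_mul]
          push_cast
          ring
      _ = _ := integral_ofReal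
  -- zeros accumulate at z₀
  set m : ℝ := (l + r) / 2 with hm
  have hml : l < m := by rw [hm]; linarith
  have hmr : m < r := by rw [hm]; linarith
  set z₀ : ℂ := ((1 + m : ℝ) : ℂ) with hz₀
  have hz₀U : z₀ ∈ U := by
    refine ⟨?_, ?_⟩ <;> simp only [hU, hz₀, Complex.ofReal_re, Set.mem_setOf_eq] <;> linarith
  have hfreq : ∃ᶠ z in 𝓝[≠] z₀, mellin f z = 0 := by
    set u : ℕ → ℂ := fun n => ((1 + (m + (r - m) / (n + 2)) : ℝ) : ℂ) with hu
    have hmem : ∀ n : ℕ, m + (r - m) / (n + 2) ∈ Set.Ioo l r := by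
      intro n
      have hn0 : (0:ℝ) ≤ (n:ℝ) := Nat.cast_nonneg n
      have hn2 : (1:ℝ) < (n:ℝ) + 2 := by linarith
      constructor
      · have : 0 < (r - m) / ((n:ℝ) + 2) := div_pos (by linarith) (by linarith)
        linarith
      · have : (r - m) / ((n:ℝ) + 2) < r - m := by
          apply div_lt_self (by linarith) hn2
        linarith
    have hzero : ∀ n : ℕ, mellin f (u n) = 0 := by
      intro n
      rw [hu, hval]
      exact_mod_cast congrArg Complex.ofReal (hcon _ (hmem n))
    have hne : ∀ n : ℕ, u n ≠ z₀ := by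
      intro n
      simp only [hu, hz₀, Ne, Complex.ofReal_inj]
      intro hcontra
      have : (r - m) / ((n:ℝ) + 2) = 0 := by linarith
      have hn0 : (0:ℝ) ≤ (n:ℝ) := Nat.cast_nonneg n
      have h1 : 0 < (r - m) / ((n:ℝ) + 2) := div_pos (by linarith) (by linarith)
      linarith
    have htend : Tendsto u atTop (𝓝[≠] z₀) := by
      apply tendsto_nhdsWithin_of_tendsto_nhds_of_eventually_within
      · rw [hz₀]
        apply (Complex.continuous_ofReal.tendsto _).comp
        have : Tendsto (fun n : ℕ => (r - m) / ((n:ℝ) + 2)) atTop (𝓝 0) := by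
          apply Tendsto.div_atTop tendsto_const_nhds
          exact tendsto_atTop_add_const_right _ 2 tendsto_natCast_atTop_atTop
        have h2 := (tendsto_const_nhds (x := (1 + m : ℝ))).add this
        rw [add_zero] at h2
        exact h2.congr (fun n => by ring)
      · exact Eventually.of_forall (fun n => hne n)
    exact htend.frequently (Frequently.of_forall hzero)
  have hzeroU : Set.EqOn (mellin f) 0 U :=
    hAn.eqOn_zero_of_preconnected_of_frequently_eq_zero hUconv.isPreconnected hz₀U hfreq
  have h1U : (1 : ℂ) ∈ U := by constructor <;> norm_num
  have : mellin f 1 = 0 := hzeroU h1U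
  rw [show (1 : ℂ) = ((1 + (0:ℝ) : ℝ) : ℂ) by norm_num, hval 0] at this
  simp only [Real.rpow_zero, mul_one, Complex.ofReal_eq_zero] at this
  exact h0 this

lemma lp_scaling (h : SchwartzMap ℝ ℝ) (η x : ℝ) {a : ℝ} (ha : 0 < a) :
    (∫ y : ℝ, a * h (a * (x - y)) * Set.indicator (Set.Ioo (0:ℝ) 1) (fun z => z ^ η) y)
      = (a ^ η)⁻¹ * ∫ u in Set.Ioo (0:ℝ) a, h (a * x - u) * u ^ η := by
  have ha' : a ≠ 0 := ha.ne'
  have key := MeasureTheory.Measure.integral_comp_div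
    (fun y : ℝ => a * h (a * (x - y)) * Set.indicator (Set.Ioo (0:ℝ) 1) (fun z => z ^ η) y) a
  rw [abs_of_pos ha, smul_eq_mul] at key
  have hptw : (fun u : ℝ => a * h (a * (x - u / a))
        * Set.indicator (Set.Ioo (0:ℝ) 1) (fun z => z ^ η) (u / a))
      = fun u : ℝ => (a * (a ^ η)⁻¹)
        * Set.indicator (Set.Ioo (0:ℝ) a) (fun z => h (a * x - z) * z ^ η) u := by
    funext u
    have harg : a * (x - u / a) = a * x - u := by field_simp
    by_cases hu : u ∈ Set.Ioo (0:ℝ) a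
    · have hu' : u / a ∈ Set.Ioo (0:ℝ) 1 := ⟨div_pos hu.1 ha, (div_lt_one ha).mpr hu.2⟩
      rw [Set.indicator_of_mem hu', Set.indicator_of_mem hu, harg,
        Real.div_rpow hu.1.le ha.le]
      field_simp
    · have hu' : u / a ∉ Set.Ioo (0:ℝ) 1 := by
        intro hcon
        exact hu ⟨(div_pos_iff_of_pos_right ha).mp hcon.1, (div_lt_one ha).mp hcon.2⟩
      rw [Set.indicator_of_notMem hu', Set.indicator_of_notMem hu]
      ring
  rw [hptw] at key
  rw [integral_const_mul, integral_indicator measurableSet_Ioo] at key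
  rw [mul_assoc] at key
  exact (mul_left_cancel₀ ha' key).symm

lemma lp_uniform_bound (h : SchwartzMap ℝ ℝ) {η : ℝ} (hη : -1 < η) (hη0 : η < 0) :
    ∃ C : ℝ, 0 < C ∧ ∀ v : ℝ,
      IntegrableOn (fun u : ℝ => h (v - u) * u ^ η) (Set.Ioi 0) ∧
      ∀ s : Set ℝ, s ⊆ Set.Ioi 0 → |∫ u in s, h (v - u) * u ^ η| ≤ C := by
  obtain ⟨M, hM, hMle⟩ := schwartz_bound h
  have hrpow : IntegrableOn (fun u : ℝ => u ^ η) (Set.Ioo 0 1) :=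
    (intervalIntegral.integrableOn_Ioo_rpow_iff one_pos).mpr hη
  have hIone : Integrable (Set.indicator (Set.Ioo (0:ℝ) 1) fun u : ℝ => u ^ η) :=
    hrpow.integrable_indicator measurableSet_Ioo
  set I : ℝ := ∫ u in Set.Ioo (0:ℝ) 1, u ^ η with hI
  have hI0 : 0 ≤ I := setIntegral_nonneg measurableSet_Ioo (fun u hu => rpow_nonneg hu.1.le η)
  have habs0 : 0 ≤ ∫ x : ℝ, |h x| := integral_nonneg (fun x => abs_nonneg _)
  refine ⟨M * I + (∫ x : ℝ, |h x|) + 1, by positivity, fun v => ?_⟩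
  set g : ℝ → ℝ := fun u =>
    M * Set.indicator (Set.Ioo (0:ℝ) 1) (fun z => z ^ η) u + |h (v - u)| with hg
  have hg_nonneg : ∀ u, 0 ≤ g u := fun u =>
    add_nonneg (mul_nonneg hM.le (Set.indicator_nonneg
      (fun z hz => rpow_nonneg hz.1.le η) u)) (abs_nonneg _)
  have hhv : Integrable (fun u : ℝ => h (v - u)) := h.integrable.comp_sub_left v
  have hg_int : Integrable g := (hIone.const_mul M).add hhv.abs
  have hbound : ∀ u ∈ Set.Ioi (0:ℝ), |h (v - u) * u ^ η| ≤ g u := by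
    intro u hu
    have hu0 : (0:ℝ) < u := hu
    rw [abs_mul, _root_.abs_of_nonneg (rpow_nonneg hu0.le η)]
    rcases lt_or_ge u 1 with hu1 | hu1
    · show |h (v - u)| * u ^ η
        ≤ M * Set.indicator (Set.Ioo (0:ℝ) 1) (fun z => z ^ η) u + |h (v - u)|
      rw [Set.indicator_of_mem (Set.mem_Ioo.mpr ⟨hu0, hu1⟩)]
      have : |h (v - u)| * u ^ η ≤ M * u ^ η :=
        mul_le_mul_of_nonneg_right (hMle _) (rpow_nonneg hu0.le η)
      exact this.trans (le_add_of_nonneg_right (abs_nonneg _))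
    · show |h (v - u)| * u ^ η
        ≤ M * Set.indicator (Set.Ioo (0:ℝ) 1) (fun z => z ^ η) u + |h (v - u)|
      rw [Set.indicator_of_notMem (by simp only [Set.mem_Ioo, not_and, not_lt]; intro _; linarith)]
      calc |h (v - u)| * u ^ η ≤ |h (v - u)| * 1 :=
            mul_le_mul_of_nonneg_left (Real.rpow_le_one_of_one_le_of_nonpos hu1 hη0.le)
              (abs_nonneg _)
        _ = M * 0 + |h (v - u)| := by ring
  have hmeas : AEStronglyMeasurable (fun u : ℝ => h (v - u) * u ^ η)
      (volume.restrict (Set.Ioi 0)) := by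
    refine ContinuousOn.aestronglyMeasurable ?_ measurableSet_Ioi
    refine ContinuousOn.mul ?_ ?_
    · exact (h.continuous.comp (continuous_const.sub continuous_id)).continuousOn
    · exact fun u hu =>
        (Real.continuousAt_rpow_const u η (Or.inl (ne_of_gt hu))).continuousWithinAt
  have hInt : IntegrableOn (fun u : ℝ => h (v - u) * u ^ η) (Set.Ioi 0) := by
    refine Integrable.mono hg_int.integrableOn hmeas ?_
    refine (ae_restrict_iff' measurableSet_Ioi).mpr (ae_of_all _ fun u hu => ?_)
    calc ‖h (v - u) * u ^ η‖ = |h (v - u) * u ^ η| := rfl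
      _ ≤ g u := hbound u hu
      _ ≤ ‖g u‖ := le_abs_self _
  refine ⟨hInt, fun s hs => ?_⟩
  calc |∫ u in s, h (v - u) * u ^ η| ≤ ∫ u in s, |h (v - u) * u ^ η| :=
        by
          have := norm_integral_le_integral_norm (μ := volume.restrict s)
            (fun u : ℝ => h (v - u) * u ^ η)
          simpa only [Real.norm_eq_abs] using this
    _ ≤ ∫ u in Set.Ioi (0:ℝ), |h (v - u) * u ^ η| := by
        refine setIntegral_mono_set hInt.abs (ae_of_all _ fun u => abs_nonneg _) ?_
        exact HasSubset.Subset.eventuallyLE hs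
    _ ≤ ∫ u in Set.Ioi (0:ℝ), g u := by
        refine setIntegral_mono_on hInt.abs hg_int.integrableOn measurableSet_Ioi ?_
        exact fun u hu => hbound u hu
    _ ≤ ∫ u : ℝ, g u := setIntegral_le_integral hg_int (ae_of_all _ hg_nonneg)
    _ = M * I + ∫ u : ℝ, |h (v - u)| := by
        rw [hg, integral_add ((hIone.const_mul M)) hhv.abs, integral_const_mul,
          integral_indicator measurableSet_Ioo]
    _ = M * I + ∫ x : ℝ, |h x| := by
        rw [integral_sub_left_eq_self (fun t => |h t|) volume v]
    _ ≤ M * I + (∫ x : ℝ, |h x|) + 1 := by linarith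

lemma lp_union_Ioo : (⋃ j : ℕ, Set.Ioo (0:ℝ) (2 ^ j)) = Set.Ioi 0 := by
  ext x
  simp only [Set.mem_iUnion, Set.mem_Ioo, Set.mem_Ioi]
  constructor
  · rintro ⟨j, hj⟩; exact hj.1
  · intro hx
    obtain ⟨n, hn⟩ := exists_nat_gt x
    have h2 : (n : ℝ) < 2 ^ n := by exact_mod_cast Nat.lt_two_pow_self (n := n)
    exact ⟨n, hx, hn.trans h2⟩


/-- **Existence of functions with prescribed decay of their Littlewood–Paley-type
blocks** (Lemma A.6, elementarized).  Let `h` be a Schwartz function on `ℝ` with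
`∫₀^∞ h(-y) dy ≠ 0`, let `γ ∈ (-1,0)` and `ε > 0`.  Then there exist `η ∈ (-1,0)` with
`|η - γ| < ε`, an index `J ∈ ℕ`, and constants `c, C > 0` such that the function
`b(y) = y^η 1_{(0,1)}(y)` satisfies, with
`Δ_j b (x) = ∫ 2^j h (2^j (x - y)) b y dy`:
(a) `sup_x |Δ_j b (x)| ≤ C 2^{-jη}` for every `j`; and
(b) `sup_x |Δ_j b (x)| ≥ c 2^{-jη}` for every `j ≥ J`. -/
theorem prescribed_littlewood_paley_block_decay
    (h : SchwartzMap ℝ ℝ)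
    (h0 : (∫ y in Set.Ioi (0 : ℝ), h (-y)) ≠ 0)
    (γ : ℝ) (hγ : γ ∈ Set.Ioo (-1 : ℝ) 0) (ε : ℝ) (hε : 0 < ε) :
    ∃ η : ℝ, -1 < η ∧ η < 0 ∧ |η - γ| < ε ∧
      ∃ J : ℕ, ∃ c C : ℝ, 0 < c ∧ 0 < C ∧
        (∀ j : ℕ, ∀ x : ℝ,
          |∫ y : ℝ, (2 : ℝ) ^ j * h ((2 : ℝ) ^ j * (x - y))
              * Set.indicator (Set.Ioo (0 : ℝ) 1) (fun z => z ^ η) y|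
            ≤ C * (2 : ℝ) ^ (-(j : ℝ) * η)) ∧
        (∀ j : ℕ, J ≤ j →
          c * (2 : ℝ) ^ (-(j : ℝ) * η)
            ≤ ⨆ x : ℝ,
                |∫ y : ℝ, (2 : ℝ) ^ j * h ((2 : ℝ) ^ j * (x - y))
                    * Set.indicator (Set.Ioo (0 : ℝ) 1) (fun z => z ^ η) y|) := by
  obtain ⟨hγ1, hγ0⟩ := hγ
  set l : ℝ := max (-1) (γ - ε) with hl
  set r : ℝ := min 0 (γ + ε) with hr
  have hl1 : -1 ≤ l := le_max_left _ _
  have hr0 : r ≤ 0 := min_le_left _ _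
  have hlγ : l < γ := max_lt hγ1 (by linarith)
  have hγr : γ < r := lt_min hγ0 (by linarith)
  obtain ⟨η, hηmem, hF⟩ := mellin_nonzero_exists h h0 hl1 hr0 (hlγ.trans hγr)
  have hη1 : -1 < η := lt_of_le_of_lt hl1 hηmem.1
  have hη0 : η < 0 := lt_of_lt_of_le hηmem.2 hr0
  have hηγ : |η - γ| < ε := by
    rw [abs_lt]
    constructor
    · have : γ - ε ≤ l := le_max_right _ _
      linarith [hηmem.1]
    · have : r ≤ γ + ε := min_le_right _ _
      linarith [hηmem.2]
  obtain ⟨C₀, hC₀pos, hC₀⟩ := lp_uniform_bound h hη1 hη0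
  -- rpow facts
  have hpow : ∀ j : ℕ, (((2:ℝ) ^ j) ^ η)⁻¹ = (2:ℝ) ^ (-(j:ℝ) * η) := by
    intro j
    rw [neg_mul, Real.rpow_neg (by norm_num : (0:ℝ) ≤ 2), ← Real.rpow_natCast 2 j,
      ← Real.rpow_mul (by norm_num : (0:ℝ) ≤ 2)]
  have hpownn : ∀ j : ℕ, 0 ≤ (((2:ℝ) ^ j) ^ η)⁻¹ := fun j =>
    inv_nonneg.mpr (Real.rpow_nonneg (pow_pos two_pos j).le η)
  -- part (a)
  have ha : ∀ j : ℕ, ∀ x : ℝ,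
      |∫ y : ℝ, (2 : ℝ) ^ j * h ((2 : ℝ) ^ j * (x - y))
          * Set.indicator (Set.Ioo (0 : ℝ) 1) (fun z => z ^ η) y|
        ≤ C₀ * (2 : ℝ) ^ (-(j : ℝ) * η) := by
    intro j x
    rw [lp_scaling h η x (pow_pos two_pos j)]
    rw [abs_mul, _root_.abs_of_nonneg (hpownn j)]
    calc (((2:ℝ) ^ j) ^ η)⁻¹ * |∫ u in Set.Ioo (0:ℝ) ((2:ℝ)^j), h ((2:ℝ)^j * x - u) * u ^ η|
        ≤ (((2:ℝ) ^ j) ^ η)⁻¹ * C₀ := by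
          refine mul_le_mul_of_nonneg_left ?_ (hpownn j)
          exact (hC₀ ((2:ℝ)^j * x)).2 _ Set.Ioo_subset_Ioi_self
      _ = C₀ * (2 : ℝ) ^ (-(j : ℝ) * η) := by rw [hpow j]; ring
  -- the limit of the integrals at x = 0
  set F0 : ℝ := ∫ u in Set.Ioi (0:ℝ), h (0 - u) * u ^ η with hF0def
  have hF0 : F0 ≠ 0 := by
    rw [hF0def]
    have : (∫ u in Set.Ioi (0:ℝ), h (0 - u) * u ^ η)
        = ∫ t in Set.Ioi (0:ℝ), h (-t) * t ^ η := by
      refine integral_congr_ae (ae_of_all _ fun u => ?_)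
      simp only [zero_sub]
    rw [this]; exact hF
  have htend : Tendsto (fun j : ℕ => ∫ u in Set.Ioo (0:ℝ) (2 ^ j), h (0 - u) * u ^ η)
      atTop (𝓝 F0) := by
    have hmono : Monotone (fun j : ℕ => Set.Ioo (0:ℝ) (2 ^ j)) := by
      intro i j hij
      refine Set.Ioo_subset_Ioo_right ?_
      exact pow_le_pow_right₀ (by norm_num) hij
    have := tendsto_setIntegral_of_monotone (μ := volume)
      (f := fun u : ℝ => h (0 - u) * u ^ η)
      (fun j : ℕ => measurableSet_Ioo) hmono
      (by rw [lp_union_Ioo]; exact (hC₀ 0).1)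
    rwa [lp_union_Ioo] at this
  have hball : ∀ᶠ j : ℕ in atTop,
      |(∫ u in Set.Ioo (0:ℝ) (2 ^ j), h (0 - u) * u ^ η) - F0| < |F0| / 2 := by
    have := htend (Metric.ball_mem_nhds F0 (by positivity : (0:ℝ) < |F0| / 2))
    filter_upwards [this] with j hj
    simpa [Real.dist_eq] using hj
  obtain ⟨J, hJ⟩ := eventually_atTop.mp hball
  refine ⟨η, hη1, hη0, hηγ, J, |F0| / 2, C₀, by positivity, hC₀pos, ha, ?_⟩
  -- part (b)
  intro j hj
  have hφ : |∫ u in Set.Ioo (0:ℝ) (2 ^ j), h (0 - u) * u ^ η| ≥ |F0| / 2 := by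
    have h1 := hJ j hj
    have h2 := abs_sub_abs_le_abs_sub F0 (∫ u in Set.Ioo (0:ℝ) (2 ^ j), h (0 - u) * u ^ η)
    rw [abs_sub_comm] at h2
    linarith
  have hbdd : BddAbove (Set.range fun x : ℝ =>
      |∫ y : ℝ, (2 : ℝ) ^ j * h ((2 : ℝ) ^ j * (x - y))
          * Set.indicator (Set.Ioo (0 : ℝ) 1) (fun z => z ^ η) y|) := by
    refine ⟨C₀ * (2 : ℝ) ^ (-(j : ℝ) * η), ?_⟩
    rintro _ ⟨x, rfl⟩
    exact ha j x
  have hval0 : |∫ y : ℝ, (2 : ℝ) ^ j * h ((2 : ℝ) ^ j * ((0:ℝ) - y))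
        * Set.indicator (Set.Ioo (0 : ℝ) 1) (fun z => z ^ η) y|
      = (2 : ℝ) ^ (-(j : ℝ) * η)
        * |∫ u in Set.Ioo (0:ℝ) (2 ^ j), h (0 - u) * u ^ η| := by
    rw [lp_scaling h η 0 (pow_pos two_pos j)]
    rw [abs_mul, _root_.abs_of_nonneg (hpownn j), hpow j]
    congr 2
    refine integral_congr_ae (ae_of_all _ fun u => ?_)
    simp only [mul_zero]
  calc |F0| / 2 * (2 : ℝ) ^ (-(j : ℝ) * η)
      ≤ (2 : ℝ) ^ (-(j : ℝ) * η)
        * |∫ u in Set.Ioo (0:ℝ) (2 ^ j), h (0 - u) * u ^ η| := by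
        rw [mul_comm]
        refine mul_le_mul_of_nonneg_left hφ (Real.rpow_nonneg (by norm_num) _)
    _ = |∫ y : ℝ, (2 : ℝ) ^ j * h ((2 : ℝ) ^ j * ((0:ℝ) - y))
          * Set.indicator (Set.Ioo (0 : ℝ) 1) (fun z => z ^ η) y| := hval0.symm
    _ ≤ ⨆ x : ℝ, |∫ y : ℝ, (2 : ℝ) ^ j * h ((2 : ℝ) ^ j * (x - y))
          * Set.indicator (Set.Ioo (0 : ℝ) 1) (fun z => z ^ η) y| := le_ciSup hbdd 0
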